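/- Let X be a connected graph with basepoint x₀. Let α: x₀ → x and β: x₀ → x′ be paths, let e be an edge with s(e) = x, let f be an edge with s(f) = x′, and let t, u ∈ (0,1). If c_α + t·e = c_β + u·f in C₁(X,ℝ), then either f = e, u = t and α is homologous to β, or f = e⁻¹, u = 1 − t and the path αe is homologous to β. -/

import Mathlib

/-- A graph in the sense of Sunada's topological crystallography: a set of vertices,
a set of edges, source and target maps, and a fixed-point free involution sending
each edge to its inverse. -/
structure SunadaGraph where
  V : Type
  E : Type
  s : E → V
  t : E → V
  inv : E → E
  s_inv : ∀ e, s (inv e) = t e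
  t_inv : ∀ e, t (inv e) = s e
  inv_inv : ∀ e, inv (inv e) = e
  inv_ne : ∀ e, inv e ≠ e

namespace SunadaGraph

variable (X : SunadaGraph)

/-- `X.IsPath x y γ` : the word of edges `γ` is a path from `x` to `y` in `X`. -/
inductive IsPath : X.V → X.V → List X.E → Prop
  | nil (x : X.V) : IsPath x x []
  | cons (e : X.E) {y : X.V} {γ : List X.E} (h : IsPath (X.t e) y γ) :
      IsPath (X.s e) y (e :: γ)

/-- A graph is connected if any two vertices are joined by a path. -/
def Connected : Prop := ∀ x y : X.V, ∃ γ : List X.E, X.IsPath x y γ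

/-- An edge is a bridge if there is no path from its target to its source
avoiding both the edge and its inverse. -/
def IsBridge (e : X.E) : Prop :=
  ¬ ∃ γ : List X.E, X.IsPath (X.t e) (X.s e) γ ∧ e ∉ γ ∧ X.inv e ∉ γ

/-- The space `C₁(X,ℝ)` of real 1-chains: formal linear combinations of edges
with `e⁻¹ = -e`, realized as finitely supported functions `c : E → ℝ` with
`c(e⁻¹) = - c(e)`. -/
noncomputable def C1 : Submodule ℝ (X.E →₀ ℝ) where
  carrier := {c | ∀ e, c (X.inv e) = - c e}
  add_mem' := by
    intro a b ha hb e
    simp only [Finsupp.add_apply, ha e, hb e]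
    ring
  zero_mem' := by intro e; simp
  smul_mem' := by
    intro r c hc e
    simp only [Finsupp.smul_apply, hc e, smul_eq_mul]
    ring

/-- The 1-chain associated to a single edge. -/
noncomputable def edgeChain (e : X.E) : ↥X.C1 :=
  ⟨Finsupp.single e 1 - Finsupp.single (X.inv e) 1, by
    intro f
    classical
    have h1 : (e = X.inv f) ↔ (X.inv e = f) := by
      constructor
      · rintro rfl; exact X.inv_inv f
      · rintro rfl; exact (X.inv_inv e).symm
    have h2 : (X.inv e = X.inv f) ↔ (e = f) := by
      constructor
      · intro h
        have := congrArg X.inv h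
        rwa [X.inv_inv, X.inv_inv] at this
      · rintro rfl; rfl
    simp only [Finsupp.sub_apply, Finsupp.single_apply, h1, h2]
    ring⟩

/-- The 1-chain `c_γ` of a path `γ`. -/
noncomputable def pathChain (γ : List X.E) : ↥X.C1 := (γ.map X.edgeChain).sum

/-- The inner product on `C₁(X,ℝ)` for which the edges form an orthonormal basis
(with `e⁻¹` counting as the negative of `e`). -/
noncomputable def chainInner (c d : ↥X.C1) : ℝ :=
  (1/2) * ((c : X.E →₀ ℝ).sum fun e x => x * (d : X.E →₀ ℝ) e)

/-- The boundary of a 1-chain. -/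
noncomputable def boundary (c : ↥X.C1) : X.V →₀ ℝ :=
  (c : X.E →₀ ℝ).sum fun e x => x • (Finsupp.single (X.t e) (1:ℝ) - Finsupp.single (X.s e) 1)

/-- A 1-cycle is a 1-chain with vanishing boundary. -/
def IsCycle (c : ↥X.C1) : Prop := X.boundary c = 0

/-- An integral 1-chain: all coefficients are integers. -/
def IsIntegral (c : ↥X.C1) : Prop := ∀ e, ∃ n : ℤ, (c : X.E →₀ ℝ) e = (n : ℝ)

/-- The support of a 1-chain: the set of edges with positive coefficient. -/
def chainSupp (c : ↥X.C1) : Set X.E := {e | 0 < (c : X.E →₀ ℝ) e}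

/-- `p` is the orthogonal projection of `C₁(X,ℝ)` onto the space `Z₁(X,ℝ)` of 1-cycles:
it takes values in `Z₁(X,ℝ)` and `c - p c` is orthogonal to every 1-cycle. -/
def IsOrthoProj (p : ↥X.C1 → ↥X.C1) : Prop :=
  (∀ c, X.IsCycle (p c)) ∧ (∀ c z, X.IsCycle z → X.chainInner (c - p c) z = 0)

/-- Two paths from `x` to `y` are homologous if one can be obtained from the other
by repeatedly inserting or deleting subwords `e e⁻¹`, and/or replacing a subword
`στ` by `τσ` where `σ` and `τ` are loops based at the same vertex. -/
inductive Homologous : X.V → X.V → List X.E → List X.E → Prop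
  | refl {x y : X.V} (γ : List X.E) (h : X.IsPath x y γ) : Homologous x y γ γ
  | cancel {x y : X.V} (γ δ : List X.E) (e : X.E)
      (h : X.IsPath x y (γ ++ e :: X.inv e :: δ)) (h' : X.IsPath x y (γ ++ δ)) :
      Homologous x y (γ ++ e :: X.inv e :: δ) (γ ++ δ)
  | swap {x y : X.V} (γ σ τ δ : List X.E) (v : X.V)
      (hσ : X.IsPath v v σ) (hτ : X.IsPath v v τ)
      (h : X.IsPath x y (γ ++ (σ ++ (τ ++ δ))))
      (h' : X.IsPath x y (γ ++ (τ ++ (σ ++ δ)))) :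
      Homologous x y (γ ++ (σ ++ (τ ++ δ))) (γ ++ (τ ++ (σ ++ δ)))
  | symm {x y : X.V} {a b : List X.E} (h : Homologous x y a b) : Homologous x y b a
  | trans {x y : X.V} {a b c : List X.E} (h1 : Homologous x y a b)
      (h2 : Homologous x y b c) : Homologous x y a c

/-- A simple path: no vertex is visited twice. -/
def IsSimplePath (x y : X.V) (γ : List X.E) : Prop :=
  X.IsPath x y γ ∧ (x :: γ.map X.t).Nodup

/-- A simple loop based at `x`: a loop in which every vertex other than `x` occurs
at most once and `x` occurs only as the initial and final vertex. -/
def IsSimpleLoop (x : X.V) (γ : List X.E) : Prop :=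
  X.IsPath x x γ ∧ (x :: (γ.map X.t).dropLast).Nodup

/-- A reduced word: no subword of the form `e e⁻¹`. -/
def Reduced (γ : List X.E) : Prop := γ.Chain' (fun a b => b ≠ X.inv a)

/-- A spanning tree: a set of edges, closed under inversion, such that the spanning
subgraph it determines is connected and has no nonempty reduced loops. -/
def IsSpanningTree (S : Set X.E) : Prop :=
  (∀ e ∈ S, X.inv e ∈ S) ∧
  (∀ x y : X.V, ∃ γ : List X.E, X.IsPath x y γ ∧ ∀ e ∈ γ, e ∈ S) ∧
  (∀ (x : X.V) (γ : List X.E), X.IsPath x x γ → (∀ e ∈ γ, e ∈ S) → X.Reduced γ → γ = [])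

/-- The quotient of a set of 1-chains by the translation action of the
integral 1-cycles. -/
def transQuot (S : Set ↥X.C1) : Type :=
  Quot (fun a b : S => ∃ z : ↥X.C1, X.IsCycle z ∧ X.IsIntegral z ∧ (b : ↥X.C1) = (a : ↥X.C1) + z)

end SunadaGraph


namespace SunadaGraph

variable {X : SunadaGraph}

lemma isPath_append {x y z : X.V} {a b : List X.E} (ha : X.IsPath x y a)
    (hb : X.IsPath y z b) : X.IsPath x z (a ++ b) := by
  induction ha with
  | nil => simpa
  | cons e h ih => exact .cons e (ih hb)

lemma isPath_single (e : X.E) : X.IsPath (X.s e) (X.t e) [e] := .cons e (.nil _)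

lemma isPath_cons_inv (e : X.E) {z : X.V} {γ : List X.E} (h : X.IsPath (X.s e) z γ) :
    X.IsPath (X.t e) z (X.inv e :: γ) := by
  have h' : X.IsPath (X.t (X.inv e)) z γ := by rw [X.t_inv]; exact h
  have := IsPath.cons (X.inv e) h'
  rwa [X.s_inv] at this

/-- Reverse of a path. -/
def revP (X : SunadaGraph) (γ : List X.E) : List X.E := (γ.map X.inv).reverse

@[simp] lemma revP_nil : X.revP [] = [] := rfl

lemma revP_cons (e : X.E) (γ : List X.E) :
    X.revP (e :: γ) = X.revP γ ++ [X.inv e] := by simp [revP]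

lemma revP_revP (γ : List X.E) : X.revP (X.revP γ) = γ := by
  simp only [revP, List.map_reverse, List.reverse_reverse, List.map_map]
  rw [show X.inv ∘ X.inv = id from funext X.inv_inv, List.map_id]

lemma isPath_rev {x y : X.V} {γ : List X.E} (h : X.IsPath x y γ) :
    X.IsPath y x (X.revP γ) := by
  induction h with
  | nil => exact .nil _
  | cons e h ih =>
      rw [revP_cons]
      refine isPath_append ih ?_
      have := IsPath.cons (X.inv e) (IsPath.nil (X.t (X.inv e)))
      rw [X.s_inv, X.t_inv] at this
      exact this

lemma Homologous.paths {x y : X.V} {a b : List X.E} (h : X.Homologous x y a b) :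
    X.IsPath x y a ∧ X.IsPath x y b := by
  induction h with
  | refl γ h => exact ⟨h, h⟩
  | cancel γ δ e h h' => exact ⟨h, h'⟩
  | swap γ σ τ δ v hσ hτ h h' => exact ⟨h, h'⟩
  | symm h ih => exact ⟨ih.2, ih.1⟩
  | trans h1 h2 ih1 ih2 => exact ⟨ih1.1, ih2.2⟩

lemma homologous_context {w z x y : X.V} {P S a b : List X.E}
    (h : X.Homologous x y a b) (hP : X.IsPath w x P) (hS : X.IsPath y z S) :
    X.Homologous w z (P ++ a ++ S) (P ++ b ++ S) := by
  induction h with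
  | refl γ h => exact .refl _ (isPath_append (isPath_append hP h) hS)
  | cancel γ δ e h h' =>
      have e1 : P ++ (γ ++ e :: X.inv e :: δ) ++ S
          = (P ++ γ) ++ e :: X.inv e :: (δ ++ S) := by simp
      have e2 : P ++ (γ ++ δ) ++ S = (P ++ γ) ++ (δ ++ S) := by simp
      rw [e1, e2]
      refine .cancel _ _ e ?_ ?_
      · rw [← e1]; exact isPath_append (isPath_append hP h) hS
      · rw [← e2]; exact isPath_append (isPath_append hP h') hS
  | swap γ σ τ δ v hσ hτ h h' =>
      have e1 : P ++ (γ ++ (σ ++ (τ ++ δ))) ++ S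
          = (P ++ γ) ++ (σ ++ (τ ++ (δ ++ S))) := by simp
      have e2 : P ++ (γ ++ (τ ++ (σ ++ δ))) ++ S
          = (P ++ γ) ++ (τ ++ (σ ++ (δ ++ S))) := by simp
      rw [e1, e2]
      refine .swap _ _ _ _ v hσ hτ ?_ ?_
      · rw [← e1]; exact isPath_append (isPath_append hP h) hS
      · rw [← e2]; exact isPath_append (isPath_append hP h') hS
  | symm h ih => exact .symm ih
  | trans h1 h2 ih1 ih2 => exact .trans ih1 ih2

/-- Inserting `P ++ revP P` in the middle of a path yields a homologous path. -/
lemma homologous_insert {w x y z : X.V} {A D : List X.E}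
    (hA : X.IsPath w x A) (hD : X.IsPath x z D) {P : List X.E} (hP : X.IsPath x y P) :
    X.Homologous w z (A ++ D) (A ++ (P ++ X.revP P) ++ D) := by
  induction hP generalizing A D with
  | nil x1 => simpa using Homologous.refl _ (isPath_append hA hD)
  | cons p hP' ih =>
      have hD' : X.IsPath (X.t p) z (X.inv p :: D) := isPath_cons_inv p hD
      have step1 : X.Homologous w z (A ++ D) (A ++ p :: X.inv p :: D) :=
        .symm (.cancel A D p (isPath_append hA (.cons p hD')) (isPath_append hA hD))
      have step2 := ih (isPath_append hA (isPath_single p)) hD'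
      refine step1.trans ?_
      have e1 : A ++ p :: X.inv p :: D = (A ++ [p]) ++ (X.inv p :: D) := by simp
      have e2 : ∀ P1 : List X.E, A ++ ((p :: P1) ++ X.revP (p :: P1)) ++ D
          = (A ++ [p]) ++ (P1 ++ X.revP P1) ++ (X.inv p :: D) := by
        intro P1; simp [revP_cons]
      rw [e1, e2]
      exact step2

lemma pathChain_nil : X.pathChain [] = 0 := rfl

lemma pathChain_cons (e : X.E) (l : List X.E) :
    X.pathChain (e :: l) = X.edgeChain e + X.pathChain l := by
  simp [pathChain]

lemma pathChain_append (a b : List X.E) :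
    X.pathChain (a ++ b) = X.pathChain a + X.pathChain b := by
  simp [pathChain]

lemma edgeChain_inv (e : X.E) : X.edgeChain (X.inv e) = - X.edgeChain e := by
  apply Subtype.ext
  simp only [edgeChain, X.inv_inv]
  push_cast
  abel

lemma pathChain_rev (γ : List X.E) : X.pathChain (X.revP γ) = - X.pathChain γ := by
  induction γ with
  | nil =>
      apply Subtype.ext
      simp [revP_nil, pathChain_nil]
  | cons e γ ih =>
      rw [revP_cons, pathChain_append, pathChain_cons, ih, pathChain_cons,
        pathChain_nil, edgeChain_inv]
      abel

lemma pathChain_coeff [DecidableEq X.E] (l : List X.E) (h : X.E) :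
    ((X.pathChain l : ↥X.C1) : X.E →₀ ℝ) h
      = (l.count h : ℝ) - (l.count (X.inv h) : ℝ) := by
  induction l with
  | nil => simp [pathChain]
  | cons g l ih =>
      rw [pathChain_cons]
      have hiff : X.inv g = h ↔ g = X.inv h := by
        constructor
        · rintro rfl; exact (X.inv_inv g).symm
        · rintro rfl; exact X.inv_inv h
      have hc : ((X.edgeChain g : ↥X.C1) : X.E →₀ ℝ) h
          = (if g = h then (1:ℝ) else 0) - (if g = X.inv h then (1:ℝ) else 0) := by
        simp only [edgeChain, Finsupp.coe_sub, Pi.sub_apply, Finsupp.single_apply, hiff]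
      have : ((X.edgeChain g + X.pathChain l : ↥X.C1) : X.E →₀ ℝ) h
          = ((X.edgeChain g : ↥X.C1) : X.E →₀ ℝ) h
            + ((X.pathChain l : ↥X.C1) : X.E →₀ ℝ) h := by
        push_cast
        simp
      rw [this, hc, ih]
      rcases eq_or_ne g h with h1 | h1
      · subst h1
        have h2 : g ≠ X.inv g := fun hh => X.inv_ne g hh.symm
        simp only [List.count_cons, beq_iff_eq, if_pos rfl, if_neg h2,
          if_neg (fun hh : X.inv g = g => X.inv_ne g hh)]
        push_cast
        ring
      · rcases eq_or_ne g (X.inv h) with h2 | h2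
        · subst h2
          simp only [List.count_cons, beq_iff_eq, if_pos rfl, if_neg h1,
            if_neg (fun hh : X.inv h = h => h1 hh)]
          push_cast
          ring
        · have h2' : X.inv h ≠ g := fun hh => h2 hh.symm
          have h1' : h ≠ g := fun hh => h1 hh.symm
          simp only [List.count_cons, beq_iff_eq, if_neg h1, if_neg h2,
            if_neg h1', if_neg h2']
          push_cast
          ring

end SunadaGraph
namespace SunadaGraph

variable {X : SunadaGraph}

/-- The elementary loop associated to an edge, given a system `q` of paths from the
basepoint. -/
def mu (X : SunadaGraph) (q : X.V → List X.E) (g : X.E) : List X.E :=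
  q (X.s g) ++ g :: X.revP (q (X.t g))

/-- Replace each edge of a word by its elementary loop. -/
def Phi (X : SunadaGraph) (q : X.V → List X.E) : List X.E → List X.E
  | [] => []
  | g :: l => mu X q g ++ Phi X q l

lemma Phi_append (q : X.V → List X.E) (a b : List X.E) :
    Phi X q (a ++ b) = Phi X q a ++ Phi X q b := by
  induction a with
  | nil => rfl
  | cons g a ih => simp [Phi, ih]

variable {v : X.V} {q : X.V → List X.E}

lemma mu_isPath (hq : ∀ y, X.IsPath v y (q y)) (g : X.E) :
    X.IsPath v v (mu X q g) :=
  isPath_append (hq (X.s g)) (.cons g (isPath_rev (hq (X.t g))))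

lemma Phi_isPath (hq : ∀ y, X.IsPath v y (q y)) (l : List X.E) :
    X.IsPath v v (Phi X q l) := by
  induction l with
  | nil => exact .nil v
  | cons g l ih => exact isPath_append (mu_isPath hq g) ih

lemma homologous_phi (hq : ∀ y, X.IsPath v y (q y)) (hqv : q v = [])
    {R : List X.E} {w : X.V} (hR : X.IsPath w v R) :
    X.Homologous v v (q w ++ R) (Phi X q R) := by
  induction R generalizing w with
  | nil =>
      cases hR
      rw [hqv]
      exact .refl _ (.nil v)
  | cons r R ih =>
      cases hR with
      | cons _ hR' =>
        have hins := homologous_insert (isPath_append (hq (X.s r)) (isPath_single r))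
          hR' (isPath_rev (hq (X.t r)))
        rw [revP_revP] at hins
        have ihr := ih hR'
        have hctx := homologous_context ihr (mu_isPath hq r) (.nil v)
        have e1 : q (X.s r) ++ r :: R = (q (X.s r) ++ [r]) ++ R := by simp
        have e2 : (q (X.s r) ++ [r]) ++ (X.revP (q (X.t r)) ++ q (X.t r)) ++ R
            = mu X q r ++ (q (X.t r) ++ R) ++ [] := by simp [mu]
        have e3 : mu X q r ++ Phi X q R ++ [] = Phi X q (r :: R) := by simp [Phi]
        rw [e1, ← e3]
        rw [e2] at hins
        exact hins.trans hctx
lemma mu_cancel (hq : ∀ y, X.IsPath v y (q y)) (g : X.E) :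
    X.Homologous v v (mu X q g ++ mu X q (X.inv g)) [] := by
  classical
  set a := q (X.s g) with ha
  set b := q (X.t g) with hb
  have hpa : X.IsPath v (X.s g) a := hq _
  have hpb : X.IsPath v (X.t g) b := hq _
  have hmu2 : mu X q (X.inv g) = b ++ X.inv g :: X.revP a := by
    simp [mu, X.s_inv, X.t_inv, ha, hb]
  -- word W = a ++ g :: revP b ++ (b ++ inv g :: revP a)
  have hD : X.IsPath (X.t g) v (X.inv g :: X.revP a) :=
    isPath_cons_inv g (isPath_rev hpa)
  have hA : X.IsPath v (X.t g) (a ++ [g]) := isPath_append hpa (isPath_single g)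
  have step1 : X.Homologous v v
      ((a ++ [g]) ++ (X.revP b ++ X.revP (X.revP b)) ++ (X.inv g :: X.revP a))
      ((a ++ [g]) ++ (X.inv g :: X.revP a)) :=
    .symm (homologous_insert hA hD (isPath_rev hpb))
  rw [revP_revP] at step1
  have step2 : X.Homologous v v (a ++ g :: X.inv g :: X.revP a) (a ++ X.revP a) :=
    .cancel a (X.revP a) g
      (isPath_append hpa (.cons g hD))
      (isPath_append hpa (isPath_rev hpa))
  have step3 : X.Homologous v v (a ++ X.revP a) [] := by
    have := Homologous.symm (homologous_insert (A := []) (D := [])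
      (IsPath.nil v) (IsPath.nil v) hpa)
    simpa using this
  have e1 : mu X q g ++ mu X q (X.inv g)
      = (a ++ [g]) ++ (X.revP b ++ b) ++ (X.inv g :: X.revP a) := by
    rw [hmu2]; simp [mu, ha, hb]
  have e2 : (a ++ [g]) ++ (X.inv g :: X.revP a) = a ++ g :: X.inv g :: X.revP a := by
    simp
  rw [e1]
  exact (step1.trans (e2 ▸ step2)).trans step3

lemma phi_null (hq : ∀ y, X.IsPath v y (q y)) :
    ∀ (n : ℕ) (l : List X.E), l.length ≤ n → X.pathChain l = 0 →
      X.Homologous v v (Phi X q l) [] := by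
  classical
  intro n
  induction n with
  | zero =>
      intro l hl _
      have : l = [] := List.eq_nil_of_length_eq_zero (Nat.le_zero.mp hl)
      subst this
      exact .refl _ (.nil v)
  | succ n ih =>
      intro l hl hc
      match l with
      | [] => exact .refl _ (.nil v)
      | g :: l' =>
        -- the inverse of g occurs in l'
        have hcoeff := X.pathChain_coeff (g :: l') g
        rw [hc] at hcoeff
        have hzero : ((0 : ↥X.C1) : X.E →₀ ℝ) g = 0 := rfl
        rw [hzero] at hcoeff
        have hcount : ((g :: l').count g : ℝ) = ((g :: l').count (X.inv g) : ℝ) := by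
          linarith [hcoeff]
        have hcount' : (g :: l').count g = (g :: l').count (X.inv g) := by
          exact_mod_cast hcount
        have hpos : 0 < (g :: l').count (X.inv g) := by
          rw [← hcount']
          simp [List.count_cons]
        have hmem : X.inv g ∈ g :: l' := List.count_pos_iff.mp hpos
        have hmem' : X.inv g ∈ l' := by
          rcases List.mem_cons.mp hmem with h | h
          · exact absurd h (X.inv_ne g)
          · exact h
        obtain ⟨l₂, l₃, rfl⟩ := List.append_of_mem hmem'
        have hPhi : Phi X q (g :: (l₂ ++ X.inv g :: l₃))
            = mu X q g ++ (Phi X q l₂ ++ (mu X q (X.inv g) ++ Phi X q l₃)) := by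
          simp [Phi, Phi_append, List.append_assoc]
        have hswap : X.Homologous v v
            (mu X q g ++ (Phi X q l₂ ++ (mu X q (X.inv g) ++ Phi X q l₃)))
            (mu X q g ++ (mu X q (X.inv g) ++ (Phi X q l₂ ++ Phi X q l₃))) := by
          refine .swap _ _ _ _ v (Phi_isPath hq l₂) (mu_isPath hq (X.inv g)) ?_ ?_
          · exact isPath_append (mu_isPath hq g) (isPath_append (Phi_isPath hq l₂)
              (isPath_append (mu_isPath hq (X.inv g)) (Phi_isPath hq l₃)))
          · exact isPath_append (mu_isPath hq g) (isPath_append (mu_isPath hq (X.inv g))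
              (isPath_append (Phi_isPath hq l₂) (Phi_isPath hq l₃)))
        have hctx := homologous_context (mu_cancel hq g) (IsPath.nil v)
          (Phi_isPath hq (l₂ ++ l₃))
        have e1 : [] ++ (mu X q g ++ mu X q (X.inv g)) ++ Phi X q (l₂ ++ l₃)
            = mu X q g ++ (mu X q (X.inv g) ++ (Phi X q l₂ ++ Phi X q l₃)) := by
          simp [Phi_append]
        have e2 : ([] : List X.E) ++ [] ++ Phi X q (l₂ ++ l₃) = Phi X q (l₂ ++ l₃) := by
          simp
        rw [e1, e2] at hctx
        have hlen : (l₂ ++ l₃).length ≤ n := by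
          simp only [List.length_cons, List.length_append] at hl ⊢
          omega
        have hc' : X.pathChain (l₂ ++ l₃) = 0 := by
          have expand : X.pathChain (g :: (l₂ ++ X.inv g :: l₃))
              = X.pathChain (l₂ ++ l₃) := by
            rw [pathChain_cons, pathChain_append, pathChain_cons, edgeChain_inv,
              pathChain_append]
            abel
          rw [← expand, hc]
        exact (hPhi ▸ (hswap.trans hctx)).trans (ih _ hlen hc')

lemma homologous_of_pathChain_eq (hconn : X.Connected) {x₀ x : X.V} {α β : List X.E}
    (hα : X.IsPath x₀ x α) (hβ : X.IsPath x₀ x β)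
    (hc : X.pathChain α = X.pathChain β) : X.Homologous x₀ x α β := by
  classical
  have hq' : ∀ y, ∃ γ, X.IsPath x₀ y γ := fun y => hconn x₀ y
  set q : X.V → List X.E := fun y => if h : y = x₀ then [] else (hq' y).choose with hqdef
  have hq : ∀ y, X.IsPath x₀ y (q y) := by
    intro y
    by_cases h : y = x₀
    · subst h; simp only [hqdef, dif_pos]; exact .nil _
    · simp [hqdef, h]; exact (hq' y).choose_spec
  have hqv : q x₀ = [] := by simp [hqdef]
  have hγpath : X.IsPath x₀ x₀ (α ++ X.revP β) := isPath_append hα (isPath_rev hβ)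
  have hγc : X.pathChain (α ++ X.revP β) = 0 := by
    rw [pathChain_append, pathChain_rev, hc]
    abel
  have hnull : X.Homologous x₀ x₀ (α ++ X.revP β) [] := by
    have h1 := homologous_phi hq hqv hγpath
    rw [hqv] at h1
    exact (List.nil_append _ ▸ h1).trans
      (phi_null hq (α ++ X.revP β).length _ le_rfl hγc)
  have h1 : X.Homologous x₀ x (α ++ []) (α ++ (X.revP β ++ X.revP (X.revP β)) ++ []) :=
    homologous_insert hα (IsPath.nil x) (isPath_rev hβ)
  rw [revP_revP] at h1
  have h2 := homologous_context hnull (IsPath.nil x₀) hβ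
  have e1 : α ++ (X.revP β ++ β) ++ [] = [] ++ (α ++ X.revP β) ++ β := by simp
  have e2 : ([] : List X.E) ++ [] ++ β = β := by simp
  rw [e1] at h1
  rw [e2] at h2
  have e3 : α ++ [] = α := by simp
  rw [e3] at h1
  exact h1.trans h2
lemma edgeChain_coeff [DecidableEq X.E] (g h : X.E) :
    ((X.edgeChain g : ↥X.C1) : X.E →₀ ℝ) h
      = (if g = h then (1:ℝ) else 0) - (if g = X.inv h then (1:ℝ) else 0) := by
  have hiff : X.inv g = h ↔ g = X.inv h := by
    constructor
    · rintro rfl; exact (X.inv_inv g).symm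
    · rintro rfl; exact X.inv_inv h
  simp only [edgeChain, Finsupp.coe_sub, Pi.sub_apply, Finsupp.single_apply, hiff]

end SunadaGraph



/-- In a connected graph with basepoint `x₀`, if `c_α + t·e = c_β + u·f`
with `t, u ∈ (0,1)`, then either `f = e`, `u = t`, and `α` is homologous to `β`, or
`f = e⁻¹`, `u = 1 − t`, and `αe` is homologous to `β`. -/
theorem bond_points_representation_unique (X : SunadaGraph) (hconn : X.Connected)
    (x₀ x x' : X.V) (α β : List X.E) (hα : X.IsPath x₀ x α) (hβ : X.IsPath x₀ x' β)
    (e f : X.E) (he : X.s e = x) (hf : X.s f = x')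
    (t u : ℝ) (ht : t ∈ Set.Ioo (0:ℝ) 1) (hu : u ∈ Set.Ioo (0:ℝ) 1)
    (heq : X.pathChain α + t • X.edgeChain e = X.pathChain β + u • X.edgeChain f) :
    (f = e ∧ u = t ∧ X.Homologous x₀ x α β) ∨
    (f = X.inv e ∧ u = 1 - t ∧ X.Homologous x₀ (X.t e) (α ++ [e]) β) := by

  classical
  obtain ⟨ht0, ht1⟩ := ht
  obtain ⟨hu0, hu1⟩ := hu
  -- evaluate both sides at the edge e
  have hcoord := congrArg (fun c : ↥X.C1 => (c : X.E →₀ ℝ) e) heq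
  have hexp : ∀ (c d : ↥X.C1) (r : ℝ), ((c + r • d : ↥X.C1) : X.E →₀ ℝ) e
      = (c : X.E →₀ ℝ) e + r * (d : X.E →₀ ℝ) e := by
    intro c d r
    push_cast
    simp
  rw [hexp, hexp] at hcoord
  rw [X.pathChain_coeff α e, X.pathChain_coeff β e,
    X.edgeChain_coeff e e, X.edgeChain_coeff f e] at hcoord
  have hene : ¬ (e = X.inv e) := fun hh => X.inv_ne e hh.symm
  rw [if_pos rfl, if_neg hene] at hcoord
  set A1 : ℝ := (α.count e : ℝ) with hA1
  set A2 : ℝ := (α.count (X.inv e) : ℝ) with hA2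
  set B1 : ℝ := (β.count e : ℝ) with hB1
  set B2 : ℝ := (β.count (X.inv e) : ℝ) with hB2
  by_cases hfe : f = e
  · -- first case
    subst hfe
    rw [if_pos rfl, if_neg hene] at hcoord
    -- A1 - A2 + t = B1 - B2 + u
    have hk : u - t = ((α.count f : ℤ) - α.count (X.inv f) - β.count f
        + β.count (X.inv f) : ℤ) := by
      push_cast
      rw [hA1, hA2, hB1, hB2] at hcoord
      push_cast at hcoord
      linarith
    have hk0 : ((α.count f : ℤ) - α.count (X.inv f) - β.count f
        + β.count (X.inv f) : ℤ) = 0 := by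
      have h1 : (-1 : ℝ) < ((α.count f : ℤ) - α.count (X.inv f) - β.count f
          + β.count (X.inv f) : ℤ) := by rw [← hk]; linarith
      have h2 : (((α.count f : ℤ) - α.count (X.inv f) - β.count f
          + β.count (X.inv f) : ℤ) : ℝ) < 1 := by rw [← hk]; linarith
      have h1' : (-1 : ℤ) < ((α.count f : ℤ) - α.count (X.inv f) - β.count f
          + β.count (X.inv f) : ℤ) := by exact_mod_cast h1
      have h2' : ((α.count f : ℤ) - α.count (X.inv f) - β.count f
          + β.count (X.inv f) : ℤ) < (1 : ℤ) := by exact_mod_cast h2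
      omega
    have hut : u = t := by
      have := hk
      rw [hk0] at this
      push_cast at this
      linarith
    subst hut
    have hchain : X.pathChain α = X.pathChain β := by
      have := heq
      exact add_right_cancel this
    have hx : x' = x := by rw [← he, ← hf]
    subst hx
    exact Or.inl ⟨rfl, rfl, X.homologous_of_pathChain_eq hconn hα hβ hchain⟩
  · by_cases hfie : f = X.inv e
    · -- second case
      subst hfie
      have hinvinv : X.inv e = X.inv e := rfl
      rw [if_neg (fun hh : X.inv e = e => X.inv_ne e hh), if_pos rfl] at hcoord
      -- A1 - A2 + t = B1 - B2 - u
      have hk : t + u = ((β.count e : ℤ) - β.count (X.inv e) - α.count e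
          + α.count (X.inv e) : ℤ) := by
        rw [hA1, hA2, hB1, hB2] at hcoord
        push_cast
        push_cast at hcoord
        linarith
      have hk1 : ((β.count e : ℤ) - β.count (X.inv e) - α.count e
          + α.count (X.inv e) : ℤ) = 1 := by
        have h1 : (0 : ℝ) < (((β.count e : ℤ) - β.count (X.inv e) - α.count e
            + α.count (X.inv e) : ℤ) : ℝ) := by rw [← hk]; linarith
        have h2 : (((β.count e : ℤ) - β.count (X.inv e) - α.count e
            + α.count (X.inv e) : ℤ) : ℝ) < 2 := by rw [← hk]; linarith
        have h1' : (0 : ℤ) < ((β.count e : ℤ) - β.count (X.inv e) - α.count e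
            + α.count (X.inv e) : ℤ) := by exact_mod_cast h1
        have h2' : ((β.count e : ℤ) - β.count (X.inv e) - α.count e
            + α.count (X.inv e) : ℤ) < (2 : ℤ) := by exact_mod_cast h2
        omega
      have hut : u = 1 - t := by
        have := hk
        rw [hk1] at this
        push_cast at this
        linarith
      have hchain : X.pathChain (α ++ [e]) = X.pathChain β := by
        rw [SunadaGraph.pathChain_append, SunadaGraph.pathChain_cons, SunadaGraph.pathChain_nil]
        have : X.pathChain β = X.pathChain α + (t + u) • X.edgeChain e := by
          rw [SunadaGraph.edgeChain_inv] at heq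
          have h' : X.pathChain α + t • X.edgeChain e
              = X.pathChain β - u • X.edgeChain e := by
            rw [heq]; module
          have : X.pathChain β = X.pathChain α + t • X.edgeChain e
              + u • X.edgeChain e := by
            rw [h']; module
          rw [this]; module
        rw [this, hk]
        push_cast [hk1]
        module
      have hβ' : X.IsPath x₀ (X.t e) β := by
        have : x' = X.t e := by rw [← hf, X.s_inv]
        rwa [this] at hβ
      have hαe : X.IsPath x₀ (X.t e) (α ++ [e]) := by
        refine SunadaGraph.isPath_append hα ?_
        rw [← he]
        exact SunadaGraph.isPath_single e
      exact Or.inr ⟨rfl, hut,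
        X.homologous_of_pathChain_eq hconn hαe hβ' hchain⟩
    · -- impossible case: t would be an integer
      exfalso
      have hiff2 : ¬ (f = e) := hfe
      have hiff3 : ¬ (f = X.inv e) := hfie
      rw [if_neg hiff2, if_neg hiff3] at hcoord
      have hk : t = ((β.count e : ℤ) - β.count (X.inv e) - α.count e
          + α.count (X.inv e) : ℤ) := by
        rw [hA1, hA2, hB1, hB2] at hcoord
        push_cast
        push_cast at hcoord
        linarith
      have h1' : (0 : ℤ) < ((β.count e : ℤ) - β.count (X.inv e) - α.count e
          + α.count (X.inv e) : ℤ) := by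
        have hx1 : (0:ℝ) < (((β.count e : ℤ) - β.count (X.inv e) - α.count e
            + α.count (X.inv e) : ℤ) : ℝ) := by rw [← hk]; exact ht0
        exact_mod_cast hx1
      have h2' : ((β.count e : ℤ) - β.count (X.inv e) - α.count e
          + α.count (X.inv e) : ℤ) < 1 := by
        have hx2 : (((β.count e : ℤ) - β.count (X.inv e) - α.count e
            + α.count (X.inv e) : ℤ) : ℝ) < (1:ℝ) := by rw [← hk]; exact ht1
        exact_mod_cast hx2
      omega
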